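/- arXiv:2307.15368 — 3 statements merged into one kernel-verified Lean document; each statement's English description precedes it below -/
import Mathlib

section
/- Suppose U ⊆ ℝ^m and there exist a vector-valued function ψ : X → ℝ^{N}, matrices A, B_1, …, B_m ∈ ℝ^{N×N} and C ∈ ℝ^{N×m} such that ψ(T(x,u)) = A ψ(x) + Σ_{i=1}^m u_i B_i ψ(x) + C u for all (x,u) ∈ X × U. Then the ℂ-span of the component functions of ψ together with the constant function 1_X is a finite-dimensional common invariant subspace under the Koopman control family associated with T, and the augmented vector satisfies the input-state separable identity [ψ(T(x,u)); 1] = [[A + Σ_{i=1}^m u_i B_i, C u], [0, 1]] · [ψ(x); 1] for all (x,u). -/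
/-- If `U ⊆ ℝ^m` and there are `ψ : X → ℝ^N`, matrices `A, B_1, …, B_m`
and `C` with `ψ(T(x,u)) = A ψ(x) + Σ_i u_i B_i ψ(x) + C u`, then the ℂ-span of the
components of `ψ` together with the constant function `1` is a finite-dimensional
common invariant subspace under the Koopman control family, and the augmented vector
`[ψ; 1]` satisfies the input-state separable identity given by the block matrix
`[[A + Σ_i u_i B_i, C u], [0, 1]]`. -/
theorem bilinear_is_input_state_separable
    {X : Type*} [Nonempty X] {m : ℕ} (U : Set (Fin m → ℝ)) (hU : U.Nonempty)
    (T : X × U → X) (N : ℕ)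
    (ψ : Fin N → X → ℝ)
    (A : Matrix (Fin N) (Fin N) ℝ) (B : Fin m → Matrix (Fin N) (Fin N) ℝ)
    (C : Matrix (Fin N) (Fin m) ℝ)
    (h : ∀ (x : X) (u : U) (i : Fin N),
      ψ i (T (x, u)) =
        (∑ j, A i j * ψ j x) + (∑ k, (u : Fin m → ℝ) k * ∑ j, B k i j * ψ j x)
          + ∑ k, C i k * (u : Fin m → ℝ) k) :
    (∀ f ∈ Submodule.span ℂ
        (insert (fun _ : X => (1 : ℂ)) (Set.range fun i => fun x => (ψ i x : ℂ))),
      ∀ u : U, (fun x => f (T (x, u))) ∈ Submodule.span ℂ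
        (insert (fun _ : X => (1 : ℂ)) (Set.range fun i => fun x => (ψ i x : ℂ))))
    ∧ FiniteDimensional ℂ ↥(Submodule.span ℂ
        (insert (fun _ : X => (1 : ℂ)) (Set.range fun i => fun x => (ψ i x : ℂ))))
    ∧ (∀ (x : X) (u : U) (i : Fin N ⊕ Unit),
        Sum.elim (fun i' => ψ i' (T (x, u))) (fun _ => (1 : ℝ)) i =
        ∑ j, Matrix.fromBlocks
            (A + ∑ k, (u : Fin m → ℝ) k • B k)
            (Matrix.of fun i' (_ : Unit) => ∑ k, C i' k * (u : Fin m → ℝ) k)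
            0 1 i j *
          Sum.elim (fun j' => ψ j' x) (fun _ => (1 : ℝ)) j) := by
  set S := Submodule.span ℂ
      (insert (fun _ : X => (1 : ℂ)) (Set.range fun i => fun x => (ψ i x : ℂ))) with hS
  have hone : (fun _ : X => (1 : ℂ)) ∈ S :=
    Submodule.subset_span (Set.mem_insert _ _)
  have hpsi : ∀ i, (fun x => (ψ i x : ℂ)) ∈ S := fun i =>
    Submodule.subset_span (Set.mem_insert_of_mem _ ⟨i, rfl⟩)
  have key : ∀ (u : U) (i : Fin N), (fun x => (ψ i (T (x, u)) : ℂ)) ∈ S := by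
    intro u i
    have heq : (fun x => (ψ i (T (x, u)) : ℂ)) =
        (∑ j, ((A i j : ℂ) + ∑ k, ((u : Fin m → ℝ) k : ℂ) * (B k i j : ℂ)) •
          (fun x => (ψ j x : ℂ)))
        + ((∑ k, (C i k : ℂ) * ((u : Fin m → ℝ) k : ℂ)) • fun _ : X => (1 : ℂ)) := by
      funext x
      simp only [Finset.sum_apply, Pi.add_apply, Pi.smul_apply, smul_eq_mul, mul_one]
      rw [h x u i]
      push_cast
      simp only [Finset.mul_sum, add_mul, Finset.sum_mul, Finset.sum_add_distrib]
      rw [add_left_inj, add_right_inj, Finset.sum_comm]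
      exact Finset.sum_congr rfl fun j _ => Finset.sum_congr rfl fun k _ => by ring
    rw [heq]
    exact Submodule.add_mem _
      (Submodule.sum_mem _ fun j _ => Submodule.smul_mem _ _ (hpsi j))
      (Submodule.smul_mem _ _ hone)
  refine ⟨?_, ?_, ?_⟩
  · intro f hf u
    induction hf using Submodule.span_induction with
    | mem g hg =>
      rcases hg with hg | ⟨i, rfl⟩
      · subst hg; exact hone
      · exact key u i
    | zero => exact Submodule.zero_mem _
    | add g₁ g₂ _ _ h1 h2 =>
      have : (fun x => (g₁ + g₂) (T (x, u))) =
          (fun x => g₁ (T (x, u))) + fun x => g₂ (T (x, u)) := rfl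
      rw [this]; exact Submodule.add_mem _ h1 h2
    | smul c g _ hg =>
      have : (fun x => (c • g) (T (x, u))) = c • fun x => g (T (x, u)) := rfl
      rw [this]; exact Submodule.smul_mem _ _ hg
  · exact FiniteDimensional.span_of_finite ℂ ((Set.finite_range _).insert _)
  · intro x u i
    rw [Fintype.sum_sum_type]
    cases i with
    | inl i =>
      simp only [Sum.elim_inl, Sum.elim_inr, Matrix.fromBlocks_apply₁₁,
        Matrix.fromBlocks_apply₁₂, Matrix.of_apply, mul_one,
        Finset.univ_unique, Finset.sum_singleton]
      rw [h x u i]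
      simp only [Matrix.add_apply, Matrix.sum_apply, Matrix.smul_apply, smul_eq_mul,
        add_mul, Finset.sum_add_distrib, Finset.sum_mul]
      rw [Finset.sum_comm (s := Finset.univ) (t := Finset.univ)
        (f := fun j k => (u : Fin m → ℝ) k * B k i j * ψ j x)]
      simp only [Finset.mul_sum, mul_assoc]
    | inr i =>
      simp [Matrix.one_apply]
end

section
/- Let S be a ℂ-subspace of functions X × U → ℂ that is invariant under the augmented Koopman operator K^aug. Suppose in addition that the restricted subspaces coincide for all inputs, i.e., S|_{u=u_1} = S|_{u=u_2} for all u_1, u_2 ∈ U, where S|_{u=u*} = { x ↦ g(x,u*) : g ∈ S }. Then for every u* ∈ U, the subspace S|_{u=u*} of functions X → ℂ is a common invariant subspace under the Koopman control family {K_{u'}}_{u'∈U}, i.e., h ∘ T_{u'} ∈ S|_{u=u*} for every h ∈ S|_{u=u*} and every u' ∈ U. -/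
/-- If `S` is a ℂ-subspace of functions `X × U → ℂ` invariant under the
augmented Koopman operator, and all restricted subspaces `S|_{u=u*}` coincide, then
for every `u* ∈ U` the subspace `S|_{u=u*}` is a common invariant subspace under the
Koopman control family: `h ∘ T_{u'} ∈ S|_{u=u*}` for every `h ∈ S|_{u=u*}` and `u' ∈ U`. -/
theorem restricted_subspace_common_invariant
    {X U : Type*} [Nonempty X] [Nonempty U] (T : X × U → X)
    (S : Submodule ℂ (X × U → ℂ))
    (hinv : ∀ g ∈ S, (fun p : X × U => g (T p, p.2)) ∈ S)
    (hres : ∀ u₁ u₂ : U,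
      {h : X → ℂ | ∃ g ∈ S, h = fun x => g (x, u₁)} =
        {h : X → ℂ | ∃ g ∈ S, h = fun x => g (x, u₂)}) :
    ∀ (ustar u' : U) (h : X → ℂ),
      (∃ g ∈ S, h = fun x => g (x, ustar)) →
      (∃ g' ∈ S, (fun x => h (T (x, u'))) = fun x => g' (x, ustar)) := by
  intro ustar u' h hh
  -- move h to the u' slice
  have h1 : h ∈ {h : X → ℂ | ∃ g ∈ S, h = fun x => g (x, u')} := by
    rw [hres u' ustar]; exact hh
  obtain ⟨g₂, hg₂S, hg₂⟩ := h1
  have hK : (fun p : X × U => g₂ (T p, p.2)) ∈ S := hinv g₂ hg₂S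
  have h2 : (fun x => h (T (x, u'))) ∈
      {h : X → ℂ | ∃ g ∈ S, h = fun x => g (x, u')} :=
    ⟨_, hK, by funext x; simp [hg₂]⟩
  rw [hres u' ustar] at h2
  exact h2
end

section
/- Let S be an s-dimensional ℂ-subspace of functions X × U → ℂ consisting of input-state separable combinations that is invariant under the augmented Koopman operator K^aug (i.e., g ∘ T^aug ∈ S for all g ∈ S). Let Φ : X × U → ℂ^s be a basis of S (its components forming a basis) admitting a decomposition Φ(x,u) = G(u) H(x) for all (x,u), where G : U → ℂ^{s×l} and H : X → ℂ^l. If G(u) has full column rank (rank l) for every u ∈ U, then the ℂ-span of the component functions of H is a common invariant subspace under the Koopman control family {K_{u*}}_{u*∈U}. -/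
/-- Let `S` be an `s`-dimensional ℂ-subspace of functions `X × U → ℂ`
consisting of input-state separable combinations, invariant under the augmented Koopman
operator. Let `Φ` be a basis of `S` decomposed as `Φ(x,u) = G(u)H(x)` with
`G : U → ℂ^{s×l}`, `H : X → ℂ^l`. If `G(u)` has full column rank for every `u`, then
the ℂ-span of the components of `H` is a common invariant subspace under the Koopman
control family. -/
theorem rank_condition_gives_common_invariant_subspace
    {X U : Type*} [Nonempty X] [Nonempty U] (T : X × U → X)
    (S : Submodule ℂ (X × U → ℂ)) (s l : ℕ)
    (hSep : ∀ f ∈ S, f ∈ Submodule.span ℂ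
      {f : X × U → ℂ | ∃ (g : U → ℂ) (h : X → ℂ), ∀ (x : X) (u : U), f (x, u) = g u * h x})
    (hInv : ∀ g ∈ S, (fun p : X × U => g (T p, p.2)) ∈ S)
    (Φ : Fin s → X × U → ℂ)
    (hli : LinearIndependent ℂ Φ)
    (hspan : Submodule.span ℂ (Set.range Φ) = S)
    (G : U → Matrix (Fin s) (Fin l) ℂ) (H : Fin l → X → ℂ)
    (hdec : ∀ (x : X) (u : U) (i : Fin s), Φ i (x, u) = ∑ j, G u i j * H j x)
    (hrank : ∀ u : U, (G u).rank = l) :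
    ∀ h ∈ Submodule.span ℂ (Set.range H), ∀ u : U,
      (fun x => h (T (x, u))) ∈ Submodule.span ℂ (Set.range H) := by
  -- coefficients A : each Φ i ∘ T^aug is a combination of the Φ k
  have hΦS : ∀ i, Φ i ∈ S := fun i => hspan ▸ Submodule.subset_span (Set.mem_range_self i)
  have hcoef : ∀ i, ∃ c : Fin s → ℂ, ∀ p : X × U, Φ i (T p, p.2) = ∑ k, c k * Φ k p := by
    intro i
    have h1 : (fun p : X × U => Φ i (T p, p.2)) ∈ S := hInv _ (hΦS i)
    rw [← hspan] at h1
    obtain ⟨c, hc⟩ := (Submodule.mem_span_range_iff_exists_fun ℂ).mp h1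
    refine ⟨c, fun p => ?_⟩
    have := congrFun hc p
    simp only [Finset.sum_apply, Pi.smul_apply, smul_eq_mul] at this
    exact this.symm
  choose A hA using hcoef
  intro h hh u
  -- injectivity of (G u).mulVecLin from the rank condition
  have hker : LinearMap.ker (G u).mulVecLin = ⊥ := by
    have hrn := LinearMap.finrank_range_add_finrank_ker (G u).mulVecLin
    rw [show Module.finrank ℂ (LinearMap.range (G u).mulVecLin) = (G u).rank from rfl,
      hrank u] at hrn
    simp only [Module.finrank_pi, Fintype.card_fin] at hrn
    have : Module.finrank ℂ (LinearMap.ker (G u).mulVecLin) = 0 := by omega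
    exact Submodule.finrank_eq_zero.mp this
  obtain ⟨g, hg⟩ := (G u).mulVecLin.exists_leftInverse_of_injective hker
  -- key pointwise identity
  have hkey : ∀ x : X, (G u).mulVec (fun j => H j (T (x, u)))
      = (Matrix.of A * G u).mulVec (fun j => H j x) := by
    intro x
    funext i
    have h1 : Φ i (T (x, u), u) = ∑ k, A i k * Φ k (x, u) := hA i (x, u)
    rw [hdec (T (x, u)) u i] at h1
    simp only [Matrix.mulVec, dotProduct, Matrix.mul_apply, Matrix.of_apply]
    rw [h1]
    calc ∑ k, A i k * Φ k (x, u) = ∑ k, ∑ j, A i k * (G u k j * H j x) := by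
            simp_rw [hdec x u, Finset.mul_sum]
      _ = ∑ j, (∑ k, A i k * G u k j) * H j x := by
            rw [Finset.sum_comm]; simp_rw [Finset.sum_mul, mul_assoc]
  -- each H j ∘ T_u lies in span H
  set φ : (Fin l → ℂ) →ₗ[ℂ] (Fin l → ℂ) := g ∘ₗ (Matrix.of A * G u).mulVecLin with hφ
  have hHT : ∀ x : X, (fun j => H j (T (x, u))) = φ (fun j => H j x) := by
    intro x
    have := congrArg g (hkey x)
    calc (fun j => H j (T (x, u)))
        = LinearMap.id (fun j => H j (T (x, u))) := rfl
      _ = (g ∘ₗ (G u).mulVecLin) (fun j => H j (T (x, u))) := by rw [hg]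
      _ = g ((G u).mulVec (fun j => H j (T (x, u)))) := rfl
      _ = g ((Matrix.of A * G u).mulVec (fun j => H j x)) := by rw [hkey x]
      _ = φ (fun j => H j x) := rfl
  have hgen : ∀ j : Fin l, (fun x => H j (T (x, u))) ∈ Submodule.span ℂ (Set.range H) := by
    intro j
    have heq : (fun x => H j (T (x, u))) = ∑ k, (φ (Pi.single k 1 : Fin l → ℂ) j) • H k := by
      funext x
      have h2 : (fun i => H i x) = ∑ k, (H k x) • (Pi.single k 1 : Fin l → ℂ) := by
        funext i
        simp [Finset.sum_apply, Pi.single_apply]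
      have h3 := congrFun (hHT x) j
      rw [h3, h2, map_sum]
      simp only [map_smul, Finset.sum_apply, Pi.smul_apply, smul_eq_mul]
      ring_nf
      exact Finset.sum_congr rfl (fun k _ => mul_comm _ _)
    rw [heq]
    exact Submodule.sum_mem _ fun k _ =>
      Submodule.smul_mem _ _ (Submodule.subset_span (Set.mem_range_self k))
  -- extend to all of span H by linearity
  set L : (X → ℂ) →ₗ[ℂ] (X → ℂ) :=
    { toFun := fun f => fun x => f (T (x, u))
      map_add' := fun f₁ f₂ => rfl
      map_smul' := fun c f => rfl } with hL
  have : Submodule.span ℂ (Set.range H) ≤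
      Submodule.comap L (Submodule.span ℂ (Set.range H)) := by
    rw [Submodule.span_le]
    rintro _ ⟨j, rfl⟩
    exact hgen j
  exact this hh
end
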